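/- Let v ∈ ℂⁿ be a vector with minimal negative support, N_v = {u ∈ ker_ℤ(A) : nsup(u+v) = nsup(v)}, and suppose ψ = Σ_{u ∈ N_v} λ_{v+u} x^{v+u} is a formal solution of H_A(β) with λ_v ≠ 0. Then for every u ∈ N_v, λ_{v+u} = λ_v · [v]_{u₋}/[v+u]_{u₊}; that is, ψ = λ_v φ_v where φ_v is the canonical logarithm-free series. -/

import Mathlib

open scoped Classical

/-- The "falling factorial" scalar `∂^a x^s = fallP s a · x^{s-a}`:
`fallP s a = ∏ⱼ ∏_{l=0}^{aⱼ-1} (sⱼ - l)`. -/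
noncomputable def fallP {n : ℕ} (s : Fin n → ℂ) (a : Fin n → ℕ) : ℂ :=
  ∏ j, ∏ l ∈ Finset.range (a j), (s j - l)

/-- The positive part `u₊` of `u ∈ ℤⁿ`, as an integer vector. -/
def uposZ {n : ℕ} (u : Fin n → ℤ) : Fin n → ℤ := fun j => max (u j) 0

/-- The negative part `u₋` of `u ∈ ℤⁿ`, as an integer vector. -/
def unegZ {n : ℕ} (u : Fin n → ℤ) : Fin n → ℤ := fun j => max (-u j) 0

/-- The positive part `u₊` of `u ∈ ℤⁿ`, as a natural-number vector. -/
def uposN {n : ℕ} (u : Fin n → ℤ) : Fin n → ℕ := fun j => (u j).toNat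

/-- The negative part `u₋` of `u ∈ ℤⁿ`, as a natural-number vector. -/
def unegN {n : ℕ} (u : Fin n → ℤ) : Fin n → ℕ := fun j => (-u j).toNat

/-- The coefficient `[v]_{u₋}/[u+v]_{u₊}` of `x^{v+u}` in the series `φ_v`, where
`[v]_{u₋} = ∏_{uᵢ<0} ∏_{j=1}^{-uᵢ} (vᵢ - j + 1)` and
`[u+v]_{u₊} = ∏_{uᵢ>0} ∏_{j=1}^{uᵢ} (vᵢ + j)`. -/
noncomputable def hypCoeff {n : ℕ} (v : Fin n → ℂ) (u : Fin n → ℤ) : ℂ :=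
  (∏ j, ∏ l ∈ Finset.range (unegN u j), (v j - l)) /
  (∏ j, ∏ l ∈ Finset.range (uposN u j), (v j + (l + 1)))

/-- The negative support of a vector: the set of indices at which it is a negative
integer. -/

lemma prod_shift_eq (c : ℂ) (m : ℕ) :
    ∏ l ∈ Finset.range m, (c + (↑m - ↑l)) = ∏ l ∈ Finset.range m, (c + (↑l + 1)) := by
  rw [← Finset.prod_range_reflect (fun l => c + (↑l + 1)) m]
  apply Finset.prod_congr rfl
  intro l hl
  rw [Finset.mem_range] at hl
  have : ((m - 1 - l : ℕ) : ℂ) = (m : ℂ) - l - 1 := by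
    have h1 : m - 1 - l = m - (l + 1) := by omega
    rw [h1, Nat.cast_sub (by omega)]
    push_cast; ring
  rw [this]; ring

def nsup {n : ℕ} (s : Fin n → ℂ) : Set (Fin n) := {i | ∃ k : ℤ, k < 0 ∧ s i = (k : ℂ)}

/-- Let `v` have minimal negative support and let
`ψ = Σ_{u ∈ N_v} λ_{v+u} x^{v+u}` (given by its coefficient function `lam`, supported
on `N_v = {u ∈ ker_ℤ A : nsup(v+u) = nsup(v)}`) be a formal solution of `H_A(β)` with
`λ_v = lam 0 ≠ 0`.  Then `λ_{v+u} = λ_v · [v]_{u₋}/[v+u]_{u₊}` for every `u ∈ N_v`;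
that is, `ψ = λ_v φ_v`. -/
theorem stmt15 (d n : ℕ) (A : Matrix (Fin d) (Fin n) ℤ) (β : Fin d → ℂ) (v : Fin n → ℂ)
    (hAv : ∀ i, ∑ j, (A i j : ℂ) * v j = β i)
    (hmin : ¬ ∃ u : Fin n → ℤ, u ≠ 0 ∧ A.mulVec u = 0 ∧
      nsup (fun j => v j + (u j : ℂ)) ⊂ nsup v)
    (lam : (Fin n → ℤ) → ℂ)
    (hsupp : ∀ u, lam u ≠ 0 →
      A.mulVec u = 0 ∧ nsup (fun j => v j + (u j : ℂ)) = nsup v)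
    (htoric : ∀ u : Fin n → ℤ, A.mulVec u = 0 → ∀ w : Fin n → ℤ,
      lam (w + uposZ u) * fallP (fun j => v j + ((w j + uposZ u j : ℤ) : ℂ)) (uposN u)
        = lam (w + unegZ u) *
            fallP (fun j => v j + ((w j + unegZ u j : ℤ) : ℂ)) (unegN u))
    (hlam0 : lam 0 ≠ 0) :
    ∀ u : Fin n → ℤ, A.mulVec u = 0 → nsup (fun j => v j + (u j : ℂ)) = nsup v →
      lam u = lam 0 * hypCoeff v u := by
  intro u hAu hns
  have key := htoric u hAu (fun j => -unegZ u j)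
  have h1 : (fun j => -unegZ u j) + uposZ u = u := by
    funext j
    simp only [Pi.add_apply, uposZ, unegZ]
    omega
  have h2 : (fun j => -unegZ u j) + unegZ u = 0 := by
    funext j
    simp only [Pi.add_apply, Pi.zero_apply]
    ring
  rw [h1, h2] at key
  set D : ℂ := ∏ j, ∏ l ∈ Finset.range (uposN u j), (v j + (l + 1)) with hD
  set N : ℂ := ∏ j, ∏ l ∈ Finset.range (unegN u j), (v j - l) with hN
  have ha : fallP (fun j => v j + ((-unegZ u j + uposZ u j : ℤ) : ℂ)) (uposN u) = D := by
    unfold fallP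
    apply Finset.prod_congr rfl
    intro j _
    have huj : (-unegZ u j + uposZ u j : ℤ) = u j := by
      simp only [uposZ, unegZ]; omega
    beta_reduce
    rw [huj]
    rcases le_or_gt (u j) 0 with h | h
    · have : uposN u j = 0 := by simp [uposN]; omega
      simp [this]
    · have hm : ((uposN u j : ℕ) : ℤ) = u j := by simp [uposN]; omega
      have hm' : ((uposN u j : ℕ) : ℂ) = (u j : ℂ) := by
        rw [← hm]; push_cast; ring
      calc ∏ l ∈ Finset.range (uposN u j), (v j + (u j : ℂ) - l)
          = ∏ l ∈ Finset.range (uposN u j), (v j + ((uposN u j : ℂ) - l)) := by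
            apply Finset.prod_congr rfl; intro l _; rw [hm']; ring
        _ = ∏ l ∈ Finset.range (uposN u j), (v j + (l + 1)) := prod_shift_eq _ _
  have hb : fallP (fun j => v j + ((-unegZ u j + unegZ u j : ℤ) : ℂ)) (unegN u) = N := by
    unfold fallP
    apply Finset.prod_congr rfl
    intro j _
    have : (-unegZ u j + unegZ u j : ℤ) = 0 := by ring
    beta_reduce
    rw [this]
    simp
  rw [ha, hb] at key
  have hDne : D ≠ 0 := by
    intro h0
    rw [hD] at h0
    obtain ⟨j, _, hj⟩ := Finset.prod_eq_zero_iff.mp h0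
    obtain ⟨l, hl, hjl⟩ := Finset.prod_eq_zero_iff.mp hj
    rw [Finset.mem_range] at hl
    have hvj : v j = ((-(l + 1) : ℤ) : ℂ) := by
      push_cast
      linear_combination hjl
    have hjns : j ∈ nsup v := ⟨-(l + 1), by omega, hvj⟩
    rw [← hns] at hjns
    obtain ⟨k, hk, hkeq⟩ := hjns
    have hul : (l : ℤ) + 1 ≤ u j := by
      simp only [uposN] at hl; omega
    have : ((u j - (l + 1) : ℤ) : ℂ) = (k : ℂ) := by
      push_cast
      rw [← hkeq]
      simp only [hvj]
      push_cast
      ring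
    have hkk : (u j - (l + 1) : ℤ) = k := Int.cast_injective this
    omega
  rw [hypCoeff, ← hN, ← hD]
  field_simp
  linear_combination key
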